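/- Let V be a finite set, k ≥ 2 an integer, and w : V → ℝ with 0 ≤ w(x) ≤ 1 for all x ∈ V and Σ_{x∈V} w(x) ≥ 3k/2 − 2. Then Σ_{S ⊆ V, |S| = k−1} P^V[S] ≥ (k/(2(k−1))) · Σ_{S ⊆ V, |S| = k−2} P^V[S]. -/
import Mathlib


open Finset

/-- `Pw w V S = (∏_{x∈S} w(x)) · (∏_{x∈V∖S} (1 − w(x)))`. -/
def Pw {α : Type*} [DecidableEq α] (w : α → ℝ) (V S : Finset α) : ℝ :=
  (∏ x ∈ S, w x) * (∏ x ∈ V \ S, (1 - w x))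

lemma Pw_nonneg {α : Type*} [DecidableEq α] (w : α → ℝ)
    (hw : ∀ x, 0 ≤ w x ∧ w x ≤ 1) (V S : Finset α) : 0 ≤ Pw w V S := by
  apply mul_nonneg
  · exact prod_nonneg fun x _ => (hw x).1
  · exact prod_nonneg fun x _ => by linarith [(hw x).2]

lemma Pw_insert {α : Type*} [Fintype α] [DecidableEq α] (w : α → ℝ) (S : Finset α) (x : α)
    (hx : x ∉ S) :
    Pw w univ S * w x = Pw w univ (insert x S) * (1 - w x) := by
  unfold Pw
  have hxm : x ∈ univ \ S := by simp [hx]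
  rw [prod_insert hx, Finset.sdiff_insert, ← Finset.mul_prod_erase _ _ hxm]
  ring

/-- for a finite set `V`, `k ≥ 2`, weights in `[0,1]` with
`Σ_{x∈V} w(x) ≥ 3k/2 − 2`,
`Σ_{S ⊆ V, |S| = k−1} P^V[S] ≥ (k/(2(k−1))) · Σ_{S ⊆ V, |S| = k−2} P^V[S]`. -/
theorem stmt12 {α : Type*} [Fintype α] [DecidableEq α] (w : α → ℝ)
    (hw : ∀ x, 0 ≤ w x ∧ w x ≤ 1) (k : ℕ) (hk : 2 ≤ k)
    (hsum : 3 * (k : ℝ) / 2 - 2 ≤ ∑ x, w x) :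
    ((k : ℝ) / (2 * ((k : ℝ) - 1))) *
        ∑ S ∈ (univ : Finset α).powerset.filter (fun S => S.card = k - 2), Pw w univ S
      ≤ ∑ S ∈ (univ : Finset α).powerset.filter (fun S => S.card = k - 1), Pw w univ S := by
  set A := (univ : Finset α).powerset.filter (fun S => S.card = k - 2) with hA
  set B := (univ : Finset α).powerset.filter (fun S => S.card = k - 1) with hB
  have hk1 : (2:ℝ) ≤ (k:ℝ) := by exact_mod_cast hk
  have hP : ∀ S : Finset α, 0 ≤ Pw w univ S := Pw_nonneg w hw univ
  have hY : 0 ≤ ∑ S ∈ A, Pw w univ S := sum_nonneg fun S _ => hP S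
  have hX : 0 ≤ ∑ T ∈ B, Pw w univ T := sum_nonneg fun S _ => hP S
  -- Step 1: (k/2) * Y ≤ Σ_{S∈A} Σ_{x∉S} P[S] w(x)
  have step1 : (k:ℝ)/2 * ∑ S ∈ A, Pw w univ S
      ≤ ∑ S ∈ A, ∑ x ∈ univ \ S, Pw w univ S * w x := by
    rw [Finset.mul_sum]
    apply sum_le_sum
    intro S hS
    have hScard : S.card = k - 2 := (mem_filter.mp hS).2
    have h1 : ∑ x ∈ S, w x ≤ (k:ℝ) - 2 := by
      calc ∑ x ∈ S, w x ≤ ∑ x ∈ S, 1 := sum_le_sum fun x _ => (hw x).2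
        _ = (S.card : ℝ) := by simp
        _ = (k:ℝ) - 2 := by rw [hScard, Nat.cast_sub hk]; norm_num
    have hsplit : ∑ x ∈ univ \ S, w x + ∑ x ∈ S, w x = ∑ x, w x :=
      Finset.sum_sdiff (subset_univ S)
    have h2 : (k:ℝ)/2 ≤ ∑ x ∈ univ \ S, w x := by linarith
    calc (k:ℝ)/2 * Pw w univ S ≤ (∑ x ∈ univ \ S, w x) * Pw w univ S :=
          mul_le_mul_of_nonneg_right h2 (hP S)
      _ = ∑ x ∈ univ \ S, Pw w univ S * w x := by rw [Finset.sum_mul]; exact sum_congr rfl fun x _ => mul_comm _ _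
  -- Step 2: bijection
  have step2 : ∑ S ∈ A, ∑ x ∈ univ \ S, Pw w univ S * w x
      = ∑ T ∈ B, ∑ x ∈ T, Pw w univ T * (1 - w x) := by
    rw [Finset.sum_sigma', Finset.sum_sigma']
    apply Finset.sum_nbij' (i := fun p => (⟨insert p.2 p.1, p.2⟩ : Σ _ : Finset α, α))
      (j := fun p => (⟨p.1.erase p.2, p.2⟩ : Σ _ : Finset α, α))
    · rintro ⟨S, x⟩ hp
      rw [mem_sigma] at hp ⊢
      obtain ⟨hS, hx⟩ := hp
      rw [mem_filter] at hS
      have hxS : x ∉ S := (mem_sdiff.mp hx).2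
      refine ⟨mem_filter.mpr ⟨mem_powerset.mpr (subset_univ _), ?_⟩, mem_insert_self _ _⟩
      rw [card_insert_of_notMem hxS, hS.2]
      omega
    · rintro ⟨T, x⟩ hp
      rw [mem_sigma] at hp ⊢
      obtain ⟨hT, hx⟩ := hp
      rw [mem_filter] at hT
      refine ⟨mem_filter.mpr ⟨mem_powerset.mpr (subset_univ _), ?_⟩, ?_⟩
      · rw [card_erase_of_mem hx, hT.2]; omega
      · simp [mem_sdiff]
    · rintro ⟨S, x⟩ hp
      rw [mem_sigma] at hp
      have hxS : x ∉ S := (mem_sdiff.mp hp.2).2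
      simp [erase_insert hxS]
    · rintro ⟨T, x⟩ hp
      rw [mem_sigma] at hp
      simp [insert_erase hp.2]
    · rintro ⟨S, x⟩ hp
      rw [mem_sigma] at hp
      exact Pw_insert w S x (mem_sdiff.mp hp.2).2
  -- Step 3
  have step3 : ∑ T ∈ B, ∑ x ∈ T, Pw w univ T * (1 - w x)
      ≤ ((k:ℝ) - 1) * ∑ T ∈ B, Pw w univ T := by
    rw [Finset.mul_sum]
    apply sum_le_sum
    intro T hT
    have hTcard : T.card = k - 1 := (mem_filter.mp hT).2
    calc ∑ x ∈ T, Pw w univ T * (1 - w x) ≤ ∑ x ∈ T, Pw w univ T * 1 :=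
          sum_le_sum fun x _ => mul_le_mul_of_nonneg_left (by linarith [(hw x).1]) (hP T)
      _ = (T.card : ℝ) * Pw w univ T := by simp [mul_comm]
      _ = ((k:ℝ) - 1) * Pw w univ T := by
          rw [hTcard, Nat.cast_sub (by omega : 1 ≤ k)]; norm_num
  have main : (k:ℝ)/2 * ∑ S ∈ A, Pw w univ S ≤ ((k:ℝ) - 1) * ∑ T ∈ B, Pw w univ T := by
    calc _ ≤ _ := step1
      _ = _ := step2
      _ ≤ _ := step3
  rw [div_mul_eq_mul_div, div_le_iff₀ (by linarith : (0:ℝ) < 2 * ((k:ℝ) - 1))]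
  nlinarith [main]
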